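/- Every metrizable coarse space is normal: if the coarse structure 𝓔 on X is generated by a metric d (entourages are the sets {(x,y) : d(x,y) ≤ r}, r ≥ 0, and their subsets containing the diagonal), then any two asymptotically disjoint subsets Y, Z of X have disjoint asymptotic neighborhoods. -/

import Mathlib

def relComp {X : Type*} (ε δ : Set (X × X)) : Set (X × X) :=
  {p | ∃ y, (p.1, y) ∈ ε ∧ (y, p.2) ∈ δ}

def relInv {X : Type*} (ε : Set (X × X)) : Set (X × X) :=
  {p | (p.2, p.1) ∈ ε}

def IsBallStructure {X : Type*} (E : Set (Set (X × X))) : Prop :=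
  (∀ ε ∈ E, Set.diagonal X ⊆ ε) ∧
  (∀ ε ∈ E, ∀ δ ∈ E, ∃ lam ∈ E, relComp ε (relInv δ) ⊆ lam) ∧
  ⋃₀ E = Set.univ

def IsCoarseStructure {X : Type*} (E : Set (Set (X × X))) : Prop :=
  IsBallStructure E ∧
  ∀ ε ∈ E, ∀ δ : Set (X × X), Set.diagonal X ⊆ δ → δ ⊆ ε → δ ∈ E

def ball {X : Type*} (ε : Set (X × X)) (x : X) : Set X :=
  {y | (x, y) ∈ ε}

/-- `B(Y,ε) = ⋃_{y ∈ Y} B(y,ε)`. -/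
def ballOf {X : Type*} (ε : Set (X × X)) (Y : Set X) : Set X :=
  {x | ∃ y ∈ Y, (y, x) ∈ ε}

def IsBoundedIn {X : Type*} (E : Set (Set (X × X))) (B : Set X) : Prop :=
  B = ∅ ∨ ∃ x : X, ∃ ε ∈ E, B ⊆ ball ε x

/-- `Y` and `Z` are asymptotically disjoint. -/
def AsympDisjoint {X : Type*} (E : Set (Set (X × X))) (Y Z : Set X) : Prop :=
  ∀ ε ∈ E, IsBoundedIn E (ballOf ε Y ∩ ballOf ε Z)

/-- `U` is an asymptotic neighborhood of `A`. -/
def IsAsympNbhd {X : Type*} (E : Set (Set (X × X))) (U A : Set X) : Prop :=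
  AsympDisjoint E A Uᶜ

/-- The coarse structure generated by a metric. -/
def metricCoarse (X : Type*) [MetricSpace X] : Set (Set (X × X)) :=
  {ε | Set.diagonal X ⊆ ε ∧ ∃ r : ℝ, ∀ p ∈ ε, dist p.1 p.2 ≤ r}

lemma boundedIn_mono {X : Type*} {E : Set (Set (X × X))} {B B' : Set X}
    (h : IsBoundedIn E B') (hs : B ⊆ B') : IsBoundedIn E B := by
  rcases h with h | ⟨x, ε, hε, hb⟩
  · left; rw [h] at hs; exact Set.eq_empty_of_subset_empty hs
  · right; exact ⟨x, ε, hε, hs.trans hb⟩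

lemma closedEnt_mem {X : Type*} [MetricSpace X] {r : ℝ} (hr : 0 ≤ r) :
    {p : X × X | dist p.1 p.2 ≤ r} ∈ metricCoarse X := by
  constructor
  · rintro ⟨a, b⟩ hab
    simp only [Set.mem_diagonal_iff, Set.mem_setOf_eq] at hab
    simp [hab, hr]
  · exact ⟨r, fun p hp => hp⟩

lemma asympNbhd_aux {X : Type*} [MetricSpace X] {Y Z : Set X}
    (h : AsympDisjoint (metricCoarse X) Y Z) (hZ : Z.Nonempty) :
    IsAsympNbhd (metricCoarse X) {x | Metric.infDist x Y < Metric.infDist x Z} Y := by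
  intro ε hε
  obtain ⟨hid, r0, hr0⟩ := hε
  set r := max r0 0 with hrdef
  have hr : 0 ≤ r := le_max_right _ _
  have hrb : ∀ p ∈ ε, dist p.1 p.2 ≤ r := fun p hp => (hr0 p hp).trans (le_max_left _ _)
  set R := 3 * r + 1 with hRdef
  have hR : 0 ≤ R := by positivity
  have hmem := h _ (closedEnt_mem hR)
  refine boundedIn_mono hmem ?_
  rintro x ⟨⟨y, hy, hyx⟩, ⟨u, hu, hux⟩⟩
  have hyxd : dist y x ≤ r := hrb _ hyx
  have huxd : dist u x ≤ r := hrb _ hux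
  constructor
  · exact ⟨y, hy, by simpa using hyxd.trans (by linarith)⟩
  · -- u ∉ U, so infDist u Z ≤ infDist u Y ≤ 2r, hence infDist x Z ≤ 3r < R
    have h1 : Metric.infDist u Y ≤ 2 * r := by
      have := Metric.infDist_le_dist_of_mem (x := u) hy
      have hd : dist u y ≤ 2 * r := by
        calc dist u y ≤ dist u x + dist x y := dist_triangle _ _ _
        _ ≤ r + r := add_le_add huxd (by rwa [dist_comm])
        _ = 2 * r := by ring
      linarith
    have h2 : Metric.infDist u Z ≤ Metric.infDist u Y := not_lt.mp hu
    have h3 : Metric.infDist x Z < R := by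
      have := Metric.infDist_le_infDist_add_dist (x := x) (y := u) (s := Z)
      have hxu : dist x u ≤ r := by rwa [dist_comm]
      simp only [hRdef]
      linarith
    obtain ⟨z, hz, hzd⟩ := (Metric.infDist_lt_iff hZ).mp h3
    exact ⟨z, hz, by simp [dist_comm]; linarith⟩

lemma bounded_empty {X : Type*} {E : Set (Set (X × X))} :
    IsBoundedIn E (∅ : Set X) := Or.inl rfl

lemma ballOf_empty {X : Type*} (ε : Set (X × X)) : ballOf ε (∅ : Set X) = ∅ := by
  ext x; simp [ballOf]

theorem stmt16 {X : Type*} [MetricSpace X] (Y Z : Set X)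
    (h : AsympDisjoint (metricCoarse X) Y Z) :
    ∃ U V : Set X, Disjoint U V ∧ IsAsympNbhd (metricCoarse X) U Y ∧
      IsAsympNbhd (metricCoarse X) V Z := by
  rcases Y.eq_empty_or_nonempty with hY | hY
  · refine ⟨∅, Set.univ, disjoint_bot_left, ?_, ?_⟩
    · intro ε hε
      refine boundedIn_mono bounded_empty ?_
      rw [hY, ballOf_empty]
      exact Set.inter_subset_left
    · intro ε hε
      refine boundedIn_mono bounded_empty ?_
      rw [Set.compl_univ, ballOf_empty]
      exact Set.inter_subset_right
  rcases Z.eq_empty_or_nonempty with hZ | hZ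
  · refine ⟨Set.univ, ∅, disjoint_bot_right, ?_, ?_⟩
    · intro ε hε
      refine boundedIn_mono bounded_empty ?_
      rw [Set.compl_univ, ballOf_empty]
      exact Set.inter_subset_right
    · intro ε hε
      refine boundedIn_mono bounded_empty ?_
      rw [hZ, ballOf_empty]
      exact Set.inter_subset_left
  · have hsym : AsympDisjoint (metricCoarse X) Z Y := by
      intro ε hε
      refine boundedIn_mono (h ε hε) ?_
      rw [Set.inter_comm]
    refine ⟨{x | Metric.infDist x Y < Metric.infDist x Z},
      {x | Metric.infDist x Z < Metric.infDist x Y}, ?_,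
      asympNbhd_aux h hZ, asympNbhd_aux hsym hY⟩
    rw [Set.disjoint_left]
    intro a ha hb
    simp only [Set.mem_setOf_eq] at ha hb
    linarith
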